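/- Let A_{m,i}^k be the integers defined by A_{0,0}^k = δ_{k,0}, with A_{m,-1}^k = 0 and A_{m,i}^k = 0 for k < 0, and A_{m,i}^k = (k-1)(A_{m-1,i}^{k-1} + A_{m-1,i}^{k-2} + A_{m-1,i-1}^{k-2}) + (k+i-m-1)·A_{m-1,i-1}^{k-1} for m ≥ 1, 0 ≤ i ≤ m. Then for all m ≥ 1, m+1 ≤ k ≤ 2m, and 0 ≤ j ≤ m: Σ_{i=0}^{m} (-1)^i · C(m-i, j) · A_{m,i}^k ≥ 0. -/

import Mathlib

open Finset

/-- The three-parameter family of integers `A_{m,i}^k`. -/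
def A : ℕ → ℤ → ℤ → ℤ
  | 0, i, k => if i = 0 ∧ k = 0 then 1 else 0
  | m + 1, i, k =>
      if i < 0 ∨ k < 0 then 0
      else (k - 1) * (A m i (k - 1) + A m i (k - 2) + A m (i - 1) (k - 2))
            + (k + i - (m + 1) - 1) * A m (i - 1) (k - 1)

lemma A_k_neg (m : ℕ) (i k : ℤ) (h : k < 0) : A m i k = 0 := by
  cases m with
  | zero => simp [A]; rintro - rfl; omega
  | succ n => simp [A, h]

lemma A_i_neg (m : ℕ) (i k : ℤ) (h : i < 0) : A m i k = 0 := by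
  cases m with
  | zero => simp [A]; rintro rfl; omega
  | succ n => simp [A, h]

lemma A_i_big : ∀ (m : ℕ) (i k : ℤ), (m : ℤ) < i → A m i k = 0 := by
  intro m
  induction m with
  | zero => intro i k h; simp [A]; rintro rfl; omega
  | succ n ih =>
      intro i k h
      rw [A]
      split
      · rfl
      · rw [ih i (k-1) (by push_cast at h ⊢; omega),
          ih i (k-2) (by push_cast at h ⊢; omega),
          ih (i-1) (k-2) (by push_cast at h ⊢; omega),
          ih (i-1) (k-1) (by push_cast at h ⊢; omega)]
        ring

/-- The transformed family. -/
def B : ℕ → ℕ → ℤ → ℤ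
  | 0, j, k => if j = 0 ∧ k = 0 then 1 else 0
  | m + 1, 0, k => if k < 0 then 0 else B m 1 (k - 1)
  | m + 1, j + 1, k =>
      if k < 0 then 0 else
        ((j : ℤ) + 1) * B m (j + 1) (k - 1)
          + (k - 1) * (B m j (k - 1) + B m j (k - 2))
          + ((j : ℤ) + 2) * B m (j + 2) (k - 1)

lemma B_k_neg (m j : ℕ) (k : ℤ) (h : k < 0) : B m j k = 0 := by
  match m, j with
  | 0, j => simp [B]; rintro - rfl; omega
  | m + 1, 0 => simp [B, h]
  | m + 1, j + 1 => simp [B, h]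

lemma B_nonneg : ∀ (m j : ℕ) (k : ℤ), 0 ≤ B m j k := by
  intro m
  induction m with
  | zero => intro j k; rw [B]; split <;> norm_num
  | succ n ih =>
      intro j k
      match j with
      | 0 =>
          rw [B]; split
          · rfl
          · exact ih 1 (k - 1)
      | j + 1 =>
          rw [B]; split
          · rfl
          · rename_i hk
            push_neg at hk
            rcases lt_or_ge k 1 with h1 | h1
            · have e1 : B n j (k - 1) = 0 := B_k_neg _ _ _ (by omega)
              have e2 : B n j (k - 2) = 0 := B_k_neg _ _ _ (by omega)
              rw [e1, e2]
              simp only [add_zero, mul_zero]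
              have := ih (j + 1) (k - 1)
              have := ih (j + 2) (k - 1)
              positivity
            · have := ih (j + 1) (k - 1)
              have := ih (j + 2) (k - 1)
              have := ih j (k - 1)
              have := ih j (k - 2)
              have hk1 : (0:ℤ) ≤ k - 1 := by omega
              positivity

lemma choose_succ_int (n t : ℕ) :
    (n.choose (t + 1) : ℤ) * (t + 1) = (n.choose t : ℤ) * ((n : ℤ) - t) := by
  rcases le_or_gt t n with h | h
  · have h2 := Nat.choose_succ_right_eq n t
    zify [h] at h2
    linarith
  · rw [Nat.choose_eq_zero_of_lt (by omega), Nat.choose_eq_zero_of_lt h]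
    simp

lemma sum_eq : ∀ (m : ℕ) (j : ℕ) (k : ℤ),
    ∑ i ∈ Finset.range (m + 1), (-1 : ℤ) ^ i * ((m - i).choose j : ℤ) * A m i k
      = B m j k := by
  intro m
  induction m with
  | zero =>
      intro j k
      simp only [Finset.sum_range_one, pow_zero, one_mul, Nat.zero_sub, A, B,
        Nat.cast_ofNat]
      rcases eq_or_ne j 0 with rfl | hj
      · simp
      · rw [Nat.choose_eq_zero_of_lt (by omega)]
        simp [hj]
  | succ m ih =>
      intro j k
      rcases lt_or_ge k 0 with hk | hk
      · rw [B_k_neg _ _ _ hk]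
        apply Finset.sum_eq_zero
        intro i _
        rw [A_k_neg _ _ _ hk, mul_zero]
      -- expand A (m+1)
      have hcond : ∀ i : ℕ, ¬((i : ℤ) < 0 ∨ k < 0) := by
        intro i; push_neg; exact ⟨by positivity, hk⟩
      have expand :
          ∑ i ∈ Finset.range (m + 1 + 1),
              (-1 : ℤ) ^ i * ((m + 1 - i).choose j : ℤ) * A (m + 1) i k
            = (∑ i ∈ Finset.range (m + 2),
                (-1 : ℤ) ^ i * ((m + 1 - i).choose j : ℤ) *
                  ((k - 1) * (A m i (k - 1) + A m i (k - 2))))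
              + ∑ i ∈ Finset.range (m + 2),
                  (-1 : ℤ) ^ i * ((m + 1 - i).choose j : ℤ) *
                    ((k - 1) * A m ((i : ℤ) - 1) (k - 2)
                      + (k + (i : ℤ) - ((m : ℤ) + 1) - 1) * A m ((i : ℤ) - 1) (k - 1)) := by
        rw [← Finset.sum_add_distrib]
        apply Finset.sum_congr rfl
        intro i _
        rw [A, if_neg (hcond i)]
        ring
      rw [expand]
      have eP :
          ∑ i ∈ Finset.range (m + 2),
              (-1 : ℤ) ^ i * ((m + 1 - i).choose j : ℤ) *
                ((k - 1) * (A m i (k - 1) + A m i (k - 2)))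
            = ∑ i ∈ Finset.range (m + 1),
                (-1 : ℤ) ^ i * ((m + 1 - i).choose j : ℤ) *
                  ((k - 1) * (A m i (k - 1) + A m i (k - 2))) := by
        rw [Finset.sum_range_succ,
          A_i_big m ((m + 1 : ℕ) : ℤ) (k - 1) (by push_cast; omega),
          A_i_big m ((m + 1 : ℕ) : ℤ) (k - 2) (by push_cast; omega)]
        ring
      have eQ :
          ∑ i ∈ Finset.range (m + 2),
              (-1 : ℤ) ^ i * ((m + 1 - i).choose j : ℤ) *
                ((k - 1) * A m ((i : ℤ) - 1) (k - 2)
                  + (k + (i : ℤ) - ((m : ℤ) + 1) - 1) * A m ((i : ℤ) - 1) (k - 1))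
            = ∑ i ∈ Finset.range (m + 1),
                -((-1 : ℤ) ^ i) * ((m - i).choose j : ℤ) *
                  ((k - 1) * A m i (k - 2)
                    + (k + (i : ℤ) - (m : ℤ) - 1) * A m i (k - 1)) := by
        rw [Finset.sum_range_succ']
        have h0 : ((0 : ℕ) : ℤ) - 1 = -1 := by norm_num
        rw [h0, A_i_neg m (-1) (k - 2) (by norm_num),
          A_i_neg m (-1) (k - 1) (by norm_num)]
        simp only [mul_zero, zero_mul, zero_add, add_zero, mul_add]
        apply Finset.sum_congr rfl
        intro i hi
        have hs : m + 1 - (i + 1) = m - i := by omega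
        have hc : ((i + 1 : ℕ) : ℤ) - 1 = (i : ℤ) := by push_cast; ring
        rw [hs, hc, pow_succ]
        push_cast
        ring
      rw [eP, eQ, ← Finset.sum_add_distrib]
      simp -failIfUnchanged only [Finset.mem_range] at *
      match j with
      | 0 =>
          have step : ∀ i ∈ Finset.range (m + 1),
              (-1 : ℤ) ^ i * ((m + 1 - i).choose 0 : ℤ) *
                  ((k - 1) * (A m i (k - 1) + A m i (k - 2)))
                + -((-1 : ℤ) ^ i) * ((m - i).choose 0 : ℤ) *
                    ((k - 1) * A m i (k - 2)
                      + (k + (i : ℤ) - (m : ℤ) - 1) * A m i (k - 1))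
              = (-1 : ℤ) ^ i * ((m - i).choose 1 : ℤ) * A m i (k - 1) := by
            intro i hi
            rw [Finset.mem_range] at hi
            have hne : (((m - i).choose 1 : ℕ) : ℤ) = (m : ℤ) - (i : ℤ) := by
              rw [Nat.choose_one_right, Nat.cast_sub (by omega)]
            rw [Nat.choose_zero_right, Nat.choose_zero_right, hne]
            push_cast
            ring
          rw [Finset.sum_congr rfl step, ih 1 (k - 1), B, if_neg (by omega)]
      | t + 1 =>
          have step : ∀ i ∈ Finset.range (m + 1),
              (-1 : ℤ) ^ i * ((m + 1 - i).choose (t + 1) : ℤ) *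
                  ((k - 1) * (A m i (k - 1) + A m i (k - 2)))
                + -((-1 : ℤ) ^ i) * ((m - i).choose (t + 1) : ℤ) *
                    ((k - 1) * A m i (k - 2)
                      + (k + (i : ℤ) - (m : ℤ) - 1) * A m i (k - 1))
              = ((t : ℤ) + 1) * ((-1 : ℤ) ^ i * ((m - i).choose (t + 1) : ℤ) * A m i (k - 1))
                + ((k - 1) * ((-1 : ℤ) ^ i * ((m - i).choose t : ℤ) * A m i (k - 1))
                    + (k - 1) * ((-1 : ℤ) ^ i * ((m - i).choose t : ℤ) * A m i (k - 2)))
                + ((t : ℤ) + 2) * ((-1 : ℤ) ^ i * ((m - i).choose (t + 2) : ℤ) * A m i (k - 1)) := by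
            intro i hi
            rw [Finset.mem_range] at hi
            have h1 : (((m + 1 - i).choose (t + 1) : ℕ) : ℤ)
                = ((m - i).choose t : ℤ) + ((m - i).choose (t + 1) : ℤ) := by
              have : m + 1 - i = (m - i) + 1 := by omega
              rw [this, Nat.choose_succ_succ]
              push_cast; ring
            have h2 : ((m - i).choose (t + 2) : ℤ) * ((t : ℤ) + 2)
                = ((m - i).choose (t + 1) : ℤ) * ((m : ℤ) - (i : ℤ) - ((t : ℤ) + 1)) := by
              have := choose_succ_int (m - i) (t + 1)
              rw [Nat.cast_sub (by omega)] at this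
              push_cast at this ⊢
              linarith
            rw [h1]
            linear_combination (-((-1 : ℤ) ^ i * A m i (k - 1))) * h2
          rw [Finset.sum_congr rfl step]
          simp only [Finset.sum_add_distrib, ← Finset.mul_sum]
          rw [ih (t + 1) (k - 1), ih t (k - 1), ih t (k - 2), ih (t + 2) (k - 1),
            B, if_neg (by omega)]
          ring

theorem stmt_7 (m k j : ℕ) (hm : 1 ≤ m) (hk1 : m + 1 ≤ k) (hk2 : k ≤ 2 * m)
    (hj : j ≤ m) :
    0 ≤ ∑ i ∈ Finset.range (m + 1), (-1 : ℤ) ^ i * ((m - i).choose j : ℤ) * A m i k := by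
  rw [sum_eq]
  exact B_nonneg m j k
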